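/- Let q ∈ ℂ* with q = -1/2, α ∈ ℂ, m a nonzero integer, and H ∈ ℂ[t] satisfy (t - (m/2)α) H(t - m/2) = (t - (m/2)α + m/2) H(t) as polynomials. Then H = 0. -/

import Mathlib

open Polynomial

/-- If `(t - (m/2)α) H(t - m/2) = (t - (m/2)α + m/2) H(t)` with `m ≠ 0`, then `H = 0`. -/
theorem stmt11 (α : ℂ) (m : ℤ) (hm : m ≠ 0) (H : ℂ[X])
    (h : (X - C ((m : ℂ) / 2 * α)) * H.comp (X - C ((m : ℂ) / 2))
        = (X - C ((m : ℂ) / 2 * α - (m : ℂ) / 2)) * H) :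
    H = 0 := by
  set a : ℂ := (m : ℂ) / 2 * α with ha
  set c : ℂ := (m : ℂ) / 2 with hc0
  have hmc : (m : ℂ) ≠ 0 := by exact_mod_cast hm
  have hc : c ≠ 0 := by
    rw [hc0]; exact div_ne_zero hmc two_ne_zero
  have key : ∀ x : ℂ, (x - a) * H.eval (x - c) = (x - (a - c)) * H.eval x := by
    intro x
    have := congrArg (eval x) h
    simpa [eval_comp] using this
  have root : ∀ k : ℕ, H.eval (a + k * c) = 0 := by
    intro k
    induction k with
    | zero =>
      have h0 := key a
      simp only [sub_self, zero_mul, sub_sub_cancel] at h0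
      have := h0.symm
      rcases mul_eq_zero.mp this with h1 | h1
      · exact absurd h1 hc
      · simpa using h1
    | succ n ih =>
      have h1 := key (a + (n + 1 : ℕ) * c)
      have e1 : a + (n + 1 : ℕ) * c - a = (n + 1 : ℕ) * c := by ring
      have e2 : a + (n + 1 : ℕ) * c - c = a + (n : ℕ) * c := by push_cast; ring
      have e3 : a + (n + 1 : ℕ) * c - (a - c) = ((n : ℂ) + 2) * c := by push_cast; ring
      rw [e1, e2, e3, ih, mul_zero] at h1
      have hne : ((n : ℂ) + 2) * c ≠ 0 := by
        apply mul_ne_zero _ hc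
        intro hcon
        have : (n : ℂ) = -2 := by linear_combination hcon
        have : (n : ℝ) = -2 := by exact_mod_cast congrArg Complex.re this
        nlinarith [Nat.cast_nonneg (α := ℝ) n]
      exact (mul_eq_zero.mp h1.symm).resolve_left hne
  apply Polynomial.eq_zero_of_infinite_isRoot
  apply Set.infinite_of_injective_forall_mem (f := fun k : ℕ => a + k * c)
  case hi =>
    intro i j hij
    simp only at hij
    field_simp [hc] at hij
    have h2 : (i : ℂ) = j := mul_right_cancel₀ hc (by linear_combination hij)
    exact_mod_cast h2
  case hf =>
    intro k
    exact root k
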